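/- The fundamental functions N_m : 𝔽ⁿ → 𝔽, m ∈ ℳ, of the (σ,δ)-evaluation satisfy the recursion: N₁(a) = 1 for the empty word 1, and for every word m ∈ ℳ and every a ∈ 𝔽ⁿ, the column vector whose i-th entry is N_{xᵢm}(a) equals σ(N_m(a))·a + δ(N_m(a)). -/

import Mathlib

/- Common setup: free multivariate skew polynomial rings over a division ring. -/

open Matrix Finsupp

/-- The underlying left `𝔽`-module of the free multivariate skew polynomial ring:
the free left `𝔽`-module with basis the free monoid on `n` symbols. -/
abbrev SkewPoly (𝔽 : Type*) [DivisionRing 𝔽] (n : ℕ) : Type _ := FreeMonoid (Fin n) →₀ 𝔽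

namespace SkewPoly

variable {𝔽 : Type*} [DivisionRing 𝔽] {n : ℕ}

/-- The variable `xᵢ` as a skew polynomial. -/
noncomputable def X (𝔽 : Type*) [DivisionRing 𝔽] {n : ℕ} (i : Fin n) : SkewPoly 𝔽 n :=
  Finsupp.single (FreeMonoid.of i) 1

/-- The constant `a` as a skew polynomial (coefficient on the empty word). -/
noncomputable def C {𝔽 : Type*} [DivisionRing 𝔽] (n : ℕ) (a : 𝔽) :
    SkewPoly 𝔽 n := Finsupp.single 1 a

/-- The degree of a skew polynomial: the maximal length of a word in its support
(`⊥` for the zero polynomial). -/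
noncomputable def deg (F : SkewPoly 𝔽 n) : WithBot ℕ :=
  F.support.sup fun m => ((FreeMonoid.length m : ℕ) : WithBot ℕ)

/-- A matrix morphism `σ : 𝔽 → Mₙ(𝔽)`: a unital ring homomorphism. -/
def IsMatrixMorphism (σ : 𝔽 → Matrix (Fin n) (Fin n) 𝔽) : Prop :=
  σ 1 = 1 ∧ (∀ a b : 𝔽, σ (a + b) = σ a + σ b) ∧ (∀ a b : 𝔽, σ (a * b) = σ a * σ b)

/-- A `σ`-vector derivation `δ : 𝔽 → 𝔽ⁿ`: additive with `δ(ab) = σ(a)δ(b) + δ(a)b`. -/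
def IsVectorDerivation (σ : 𝔽 → Matrix (Fin n) (Fin n) 𝔽) (δ : 𝔽 → Fin n → 𝔽) : Prop :=
  (∀ a b : 𝔽, δ (a + b) = δ a + δ b) ∧
    (∀ a b : 𝔽, δ (a * b) = σ a *ᵥ δ b + fun i => δ a i * b)

/-- A multiplication on the free module `SkewPoly 𝔽 n` making it a ring (with the
existing addition) whose identity is the empty word, which restricts to concatenation
on monomials, is additive on degrees of nonzero elements, and for which left
multiplication by constants is scalar multiplication. -/
structure RawMul (𝔽 : Type*) [DivisionRing 𝔽] (n : ℕ) where
  /-- the multiplication -/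
  mul : SkewPoly 𝔽 n → SkewPoly 𝔽 n → SkewPoly 𝔽 n
  mul_add : ∀ F G H : SkewPoly 𝔽 n, mul F (G + H) = mul F G + mul F H
  add_mul : ∀ F G H : SkewPoly 𝔽 n, mul (F + G) H = mul F H + mul G H
  mul_assoc : ∀ F G H : SkewPoly 𝔽 n, mul (mul F G) H = mul F (mul G H)
  one_mul : ∀ F : SkewPoly 𝔽 n, mul (C n 1) F = F
  mul_one : ∀ F : SkewPoly 𝔽 n, mul F (C n 1) = F
  mono_mul_mono : ∀ m m' : FreeMonoid (Fin n),
    mul (Finsupp.single m 1) (Finsupp.single m' 1) = Finsupp.single (m * m') 1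
  const_mul : ∀ (a : 𝔽) (F : SkewPoly 𝔽 n), mul (C n a) F = a • F
  deg_mul : ∀ F G : SkewPoly 𝔽 n, F ≠ 0 → G ≠ 0 → deg (mul F G) = deg F + deg G

/-- The multiplication `S` satisfies the commutation rule
`xᵢ a = Σⱼ σ_{i,j}(a) xⱼ + δᵢ(a)`. -/
def HasCommRule (S : RawMul 𝔽 n) (σ : 𝔽 → Matrix (Fin n) (Fin n) 𝔽)
    (δ : 𝔽 → Fin n → 𝔽) : Prop :=
  ∀ (i : Fin n) (a : 𝔽),
    S.mul (X 𝔽 i) (C n a) =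
      (∑ j : Fin n, Finsupp.single (FreeMonoid.of j) (σ a i j)) + C n (δ a i)

/-- `F = Σᵢ Gᵢ (xᵢ - aᵢ) + b`, i.e. `b` is a remainder of `F` upon right division
by `x₁ - a₁, …, xₙ - aₙ`; equivalently `F - b` lies in the left ideal generated by
the `xᵢ - aᵢ`. -/
def Decomposes (S : RawMul 𝔽 n) (a : Fin n → 𝔽) (F : SkewPoly 𝔽 n) (b : 𝔽) : Prop :=
  ∃ G : Fin n → SkewPoly 𝔽 n,
    F = (∑ i : Fin n, S.mul (G i) (X 𝔽 i - C n (a i))) + C n b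

/-- The evaluation of `F` at the point `a`: the unique `b ∈ 𝔽` such that `F - b`
lies in the left ideal generated by `x₁ - a₁, …, xₙ - aₙ`. -/
noncomputable def eval (S : RawMul 𝔽 n) (a : Fin n → 𝔽) (F : SkewPoly 𝔽 n) : 𝔽 :=
  letI := Classical.propDecidable (∃ b : 𝔽, Decomposes S a F b)
  if h : ∃ b : 𝔽, Decomposes S a F b then h.choose else 0

/-- The `(σ,δ)`-conjugate `a^c = σ(c) a c⁻¹ + δ(c) c⁻¹` of `a` with respect to `c`. -/
noncomputable def conj (σ : 𝔽 → Matrix (Fin n) (Fin n) 𝔽) (δ : 𝔽 → Fin n → 𝔽)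
    (a : Fin n → 𝔽) (c : 𝔽) : Fin n → 𝔽 :=
  fun i => (σ c *ᵥ a) i * c⁻¹ + δ c i * c⁻¹

/-- `I(Ω)`: the set of skew polynomials vanishing at every point of `Ω`. -/
def zeroIdeal (S : RawMul 𝔽 n) (Ω : Set (Fin n → 𝔽)) : Set (SkewPoly 𝔽 n) :=
  {F | ∀ a ∈ Ω, eval S a F = 0}

/-- The left ideal of `SkewPoly 𝔽 n` generated by `x₁ - a₁, …, xₙ - aₙ`
(the set of sums of left multiples of the generators). -/
def pointIdeal (S : RawMul 𝔽 n) (a : Fin n → 𝔽) : Set (SkewPoly 𝔽 n) :=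
  {F | ∃ G : Fin n → SkewPoly 𝔽 n, F = ∑ i : Fin n, S.mul (G i) (X 𝔽 i - C n (a i))}

/-- The P-closure `Ω̄ = Z(I(Ω))` of a set of points `Ω`. -/
def pClosure (S : RawMul 𝔽 n) (Ω : Set (Fin n → 𝔽)) : Set (Fin n → 𝔽) :=
  {a | ∀ F ∈ zeroIdeal S Ω, eval S a F = 0}

/-- `Ω` is P-closed if it equals its P-closure. -/
def IsPClosed (S : RawMul 𝔽 n) (Ω : Set (Fin n → 𝔽)) : Prop := pClosure S Ω = Ω

/-- `B` is P-independent: no point of `B` lies in the P-closure of the rest. -/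
def PIndep (S : RawMul 𝔽 n) (B : Set (Fin n → 𝔽)) : Prop :=
  ∀ a ∈ B, a ∉ pClosure S (B \ {a})

/-- `B` is a P-basis of `Ω`: a P-independent subset of `Ω` whose P-closure is `Ω`. -/
def IsPBasis (S : RawMul 𝔽 n) (B Ω : Set (Fin n → 𝔽)) : Prop :=
  B ⊆ Ω ∧ PIndep S B ∧ pClosure S B = Ω

/-- `Ω` is finitely generated: it is the P-closure of a finite subset of itself. -/
def FinGen (S : RawMul 𝔽 n) (Ω : Set (Fin n → 𝔽)) : Prop :=
  ∃ G : Set (Fin n → 𝔽), G.Finite ∧ G ⊆ Ω ∧ pClosure S G = Ω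

/-- The rank of a P-closed set: the (common) cardinality of its P-bases. -/
noncomputable def pRank (S : RawMul 𝔽 n) (Ω : Set (Fin n → 𝔽)) : ℕ :=
  sInf {k : ℕ | ∃ B : Finset (Fin n → 𝔽), IsPBasis S ↑B Ω ∧ B.card = k}

/-- The image of the evaluation map `E_Ω : R → 𝔽^Ω`, as a left `𝔽`-subspace of `𝔽^Ω`
(the span of the image; the image is itself a subspace since evaluation is left linear). -/
noncomputable def evalSpan (S : RawMul 𝔽 n) (Ω : Set (Fin n → 𝔽)) :
    Submodule 𝔽 (↥Ω → 𝔽) :=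
  Submodule.span 𝔽 (Set.range fun F : SkewPoly 𝔽 n => fun a : ↥Ω => eval S ↑a F)

/-- `I` is a two-sided ideal with respect to the multiplication `S`. -/
def IsTwoSidedIdealSet (S : RawMul 𝔽 n) (I : Set (SkewPoly 𝔽 n)) : Prop :=
  (0 : SkewPoly 𝔽 n) ∈ I ∧ (∀ F ∈ I, ∀ G ∈ I, F + G ∈ I) ∧ (∀ F ∈ I, -F ∈ I) ∧
    (∀ F ∈ I, ∀ G : SkewPoly 𝔽 n, S.mul G F ∈ I) ∧
    (∀ F ∈ I, ∀ G : SkewPoly 𝔽 n, S.mul F G ∈ I)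


/-- The left row-rank of the skew Vandermonde matrix `V_d(G)`: the dimension of the
left `𝔽`-span of its rows `(N_m(c))_{c ∈ G}`, indexed by the words `m` of length `< d`,
where `N_m(c)` is the evaluation of the monomial `m` at the point `c`. -/
noncomputable def vandermondeRank (S : RawMul 𝔽 n) (G : Finset (Fin n → 𝔽)) (d : ℕ) :
    Cardinal :=
  Module.rank 𝔽 ↥(Submodule.span 𝔽 (Set.range
    fun m : {m : FreeMonoid (Fin n) // FreeMonoid.length m < d} =>
      fun c : ↥G => eval S ↑c (Finsupp.single (m : FreeMonoid (Fin n)) (1 : 𝔽))))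

end SkewPoly

open SkewPoly

namespace SkewPoly

variable {𝔽 : Type*} [DivisionRing 𝔽] {n : ℕ}

lemma zero_mul' (S : RawMul 𝔽 n) (F : SkewPoly 𝔽 n) : S.mul 0 F = 0 := by
  have h := S.add_mul 0 0 F
  rw [add_zero] at h
  exact (left_eq_add.mp h)

lemma mul_zero' (S : RawMul 𝔽 n) (F : SkewPoly 𝔽 n) : S.mul F 0 = 0 := by
  have h := S.mul_add F 0 0
  rw [add_zero] at h
  exact (left_eq_add.mp h)

lemma smul_mul' (S : RawMul 𝔽 n) (b : 𝔽) (F G : SkewPoly 𝔽 n) :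
    S.mul (b • F) G = b • S.mul F G := by
  rw [← S.const_mul b F, S.mul_assoc, S.const_mul]

lemma mul_sub' (S : RawMul 𝔽 n) (F G H : SkewPoly 𝔽 n) :
    S.mul F (G - H) = S.mul F G - S.mul F H := by
  have h := S.mul_add F (G - H) H
  rw [sub_add_cancel] at h
  exact eq_sub_of_add_eq h.symm

lemma sub_mul' (S : RawMul 𝔽 n) (F G H : SkewPoly 𝔽 n) :
    S.mul (F - G) H = S.mul F H - S.mul G H := by
  have h := S.add_mul (F - G) G H
  rw [sub_add_cancel] at h
  exact eq_sub_of_add_eq h.symm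

lemma mul_sum' (S : RawMul 𝔽 n) (F : SkewPoly 𝔽 n) {ι : Type*} (s : Finset ι)
    (H : ι → SkewPoly 𝔽 n) :
    S.mul F (∑ j ∈ s, H j) = ∑ j ∈ s, S.mul F (H j) :=
  map_sum (AddMonoidHom.mk' (S.mul F) (S.mul_add F)) H s

lemma sum_mul' (S : RawMul 𝔽 n) (H : SkewPoly 𝔽 n) {ι : Type*} (s : Finset ι)
    (F : ι → SkewPoly 𝔽 n) :
    S.mul (∑ j ∈ s, F j) H = ∑ j ∈ s, S.mul (F j) H :=
  map_sum (AddMonoidHom.mk' (fun F => S.mul F H) (fun a b => S.add_mul a b H)) F s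

lemma append_of_inj (i : Fin n) :
    Function.Injective (fun m : FreeMonoid (Fin n) => m * FreeMonoid.of i) := by
  intro x y h
  have h2 := congrArg FreeMonoid.toList h
  simp only [FreeMonoid.toList_mul, FreeMonoid.toList_of] at h2
  exact FreeMonoid.toList.injective (List.append_cancel_right h2)

lemma append_of_eq {m m' : FreeMonoid (Fin n)} {i i' : Fin n}
    (h : m * FreeMonoid.of i = m' * FreeMonoid.of i') : m = m' ∧ i = i' := by
  have h2 := congrArg FreeMonoid.toList h
  simp only [FreeMonoid.toList_mul, FreeMonoid.toList_of] at h2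
  obtain ⟨h3, h4⟩ := List.append_inj' h2 rfl
  exact ⟨FreeMonoid.toList.injective h3, by simpa using h4⟩

lemma mul_X (S : RawMul 𝔽 n) (i : Fin n) (F : SkewPoly 𝔽 n) :
    S.mul F (X 𝔽 i) = F.mapDomain (· * FreeMonoid.of i) := by
  induction F using Finsupp.induction with
  | zero => simp [zero_mul']
  | single_add m b f hm hb ih =>
    rw [S.add_mul, ih, Finsupp.mapDomain_add]
    congr 1
    have hsingle : (Finsupp.single m b : SkewPoly 𝔽 n) = b • Finsupp.single m 1 := by
      rw [Finsupp.smul_single, smul_eq_mul, mul_one]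
    calc S.mul (Finsupp.single m b) (X 𝔽 i) = b • Finsupp.single (m * FreeMonoid.of i) 1 := by
          rw [hsingle, smul_mul', X, S.mono_mul_mono]
      _ = Finsupp.single (m * FreeMonoid.of i) b := by
          rw [Finsupp.smul_single, smul_eq_mul, mul_one]
      _ = Finsupp.mapDomain (· * FreeMonoid.of i) (Finsupp.single m b) :=
          (Finsupp.mapDomain_single (f := fun x => x * FreeMonoid.of i)).symm

lemma le_deg {F : SkewPoly 𝔽 n} {m : FreeMonoid (Fin n)} (hm : m ∈ F.support) :
    ((FreeMonoid.length m : ℕ) : WithBot ℕ) ≤ deg F := by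
  rw [deg]
  exact Finset.le_sup (f := fun m : FreeMonoid (Fin n) => ((FreeMonoid.length m : ℕ) : WithBot ℕ)) hm

lemma deg_zero : deg (0 : SkewPoly 𝔽 n) = ⊥ := by simp [deg]

lemma deg_eq_bot_iff {F : SkewPoly 𝔽 n} : deg F = ⊥ ↔ F = 0 := by
  constructor
  · intro h
    by_contra hF
    obtain ⟨m, hm⟩ := Finsupp.support_nonempty_iff.mpr hF
    have h2 := Finset.le_sup (f := fun m : FreeMonoid (Fin n) =>
      ((FreeMonoid.length m : ℕ) : WithBot ℕ)) hm
    rw [show F.support.sup (fun m => ((FreeMonoid.length m : ℕ) : WithBot ℕ)) = deg F from rfl,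
      h] at h2
    exact absurd (le_bot_iff.mp h2) (WithBot.coe_ne_bot)
  · rintro rfl; exact deg_zero

lemma apply_eq_zero_of_deg_lt {F : SkewPoly 𝔽 n} {w : FreeMonoid (Fin n)}
    (h : deg F < ((FreeMonoid.length w : ℕ) : WithBot ℕ)) : F w = 0 := by
  by_contra hw
  exact absurd (Finset.le_sup (f := fun m : FreeMonoid (Fin n) =>
    ((FreeMonoid.length m : ℕ) : WithBot ℕ)) (Finsupp.mem_support_iff.2 hw)) (not_le_of_gt h)

lemma deg_C_le (b : 𝔽) : deg (C n b) ≤ 0 := by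
  refine Finset.sup_le fun m hm => ?_
  have : m = 1 := Finset.mem_singleton.mp (Finsupp.support_single_subset hm)
  subst this
  simp

lemma deg_C_ne (b : 𝔽) (hb : b ≠ 0) : deg (C n b) = 0 := by
  rw [deg, C, Finsupp.support_single_ne_zero _ hb]
  simp

lemma deg_add_le (F G : SkewPoly 𝔽 n) : deg (F + G) ≤ max (deg F) (deg G) := by
  classical
  refine Finset.sup_le fun m hm => ?_
  rcases Finset.mem_union.mp (Finsupp.support_add hm) with h | h
  · exact le_max_of_le_left (le_deg h)
  · exact le_max_of_le_right (le_deg h)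

lemma deg_sum_le {ι : Type*} (s : Finset ι) (F : ι → SkewPoly 𝔽 n) :
    deg (∑ i ∈ s, F i) ≤ s.sup fun i => deg (F i) := by
  classical
  refine Finset.sup_le fun m hm => ?_
  obtain ⟨i, hi, hmi⟩ := Finset.mem_biUnion.mp (Finsupp.support_finset_sum hm)
  exact le_trans (le_deg hmi) (Finset.le_sup (f := fun i => deg (F i)) hi)

lemma deg_mul_C_le (S : RawMul 𝔽 n) (F : SkewPoly 𝔽 n) (b : 𝔽) :
    deg (S.mul F (C n b)) ≤ deg F := by
  by_cases hb : b = 0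
  · subst hb
    rw [show C n (0:𝔽) = (0 : SkewPoly 𝔽 n) from Finsupp.single_zero 1, mul_zero', deg_zero]
    exact bot_le
  by_cases hF : F = 0
  · subst hF; rw [zero_mul', deg_zero]
  rw [S.deg_mul F (C n b) hF (by
    intro h0
    exact hb (by simpa [C] using congrFun (congrArg DFunLike.coe h0) 1)),
    deg_C_ne b hb, add_zero]

/-- A nonzero constant is not a left combination of the `xᵢ - aᵢ`. -/
lemma const_eq_zero (S : RawMul 𝔽 n) (hn : 0 < n) (a : Fin n → 𝔽)
    (G : Fin n → SkewPoly 𝔽 n) (c : 𝔽)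
    (h : (∑ i : Fin n, S.mul (G i) (X 𝔽 i - C n (a i))) = C n c) : c = 0 := by
  classical
  by_cases hG : ∀ i, G i = 0
  · simp only [hG, zero_mul', Finset.sum_const_zero] at h
    exact (Finsupp.single_eq_zero.mp h.symm)
  exfalso
  push_neg at hG
  obtain ⟨j, hj⟩ := hG
  -- rewrite the equation
  have hsplit : ∀ i : Fin n, S.mul (G i) (X 𝔽 i - C n (a i)) =
      Finsupp.mapDomain (· * FreeMonoid.of i) (G i) - S.mul (G i) (C n (a i)) := fun i => by
    rw [mul_sub', mul_X]
  have heq : (∑ i : Fin n, Finsupp.mapDomain (· * FreeMonoid.of i) (G i)) =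
      C n c + ∑ i : Fin n, S.mul (G i) (C n (a i)) := by
    rw [← h]
    simp only [hsplit]
    rw [Finset.sum_sub_distrib, sub_add_cancel]
  -- the degree D and witnesses
  set D := Finset.univ.sup (fun i : Fin n => deg (G i)) with hD
  have hDne : D ≠ ⊥ := by
    intro hbot
    have h1 : deg (G j) ≤ Finset.univ.sup (fun i : Fin n => deg (G i)) :=
      Finset.le_sup (f := fun i : Fin n => deg (G i)) (Finset.mem_univ j)
    rw [← hD, hbot] at h1
    exact hj (deg_eq_bot_iff.mp (le_bot_iff.mp h1))
  obtain ⟨d, hd⟩ := WithBot.ne_bot_iff_exists.mp hDne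
  obtain ⟨i₀, -, hi₀⟩ := Finset.exists_mem_eq_sup Finset.univ
    (Finset.univ_nonempty_iff.mpr ⟨⟨0, hn⟩⟩) (fun i : Fin n => deg (G i))
  have hGi₀ : G i₀ ≠ 0 := by
    intro h0
    exact hDne (by rw [hD, hi₀, h0, deg_zero])
  obtain ⟨m₀, hm₀mem, hm₀⟩ := Finset.exists_mem_eq_sup (G i₀).support
    (Finsupp.support_nonempty_iff.mpr hGi₀)
    (fun m : FreeMonoid (Fin n) => ((FreeMonoid.length m : ℕ) : WithBot ℕ))
  have hlen : (FreeMonoid.length m₀ : ℕ) = d := by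
    have : ((FreeMonoid.length m₀ : ℕ) : WithBot ℕ) = (d : WithBot ℕ) := by
      rw [← hm₀]
      rw [show (G i₀).support.sup (fun m => ((FreeMonoid.length m : ℕ) : WithBot ℕ))
        = deg (G i₀) from rfl]
      rw [← hi₀, ← hD, ← hd]
      rfl
    exact_mod_cast this
  set w := m₀ * FreeMonoid.of i₀ with hw
  have hwlen : FreeMonoid.length w = d + 1 := by
    rw [hw, FreeMonoid.length_mul, FreeMonoid.length_of, hlen]
  -- evaluate both sides of heq at w
  have hcoeff := congrFun (congrArg DFunLike.coe heq) w
  have hlhs : (∑ i : Fin n, Finsupp.mapDomain (· * FreeMonoid.of i) (G i)) w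
      = G i₀ m₀ := by
    rw [Finsupp.finset_sum_apply]
    rw [Finset.sum_eq_single i₀]
    · exact Finsupp.mapDomain_apply (append_of_inj i₀) (G i₀) m₀
    · intro i _ hi
      refine Finsupp.mapDomain_notin_range _ _ ?_
      rintro ⟨m, hm⟩
      exact hi (append_of_eq hm).2
    · exact fun h => absurd (Finset.mem_univ i₀) h
  have hrhs : (C n c + ∑ i : Fin n, S.mul (G i) (C n (a i))) w = 0 := by
    have h1 : deg (C n c) ≤ (d : WithBot ℕ) :=
      le_trans (deg_C_le c) (by exact_mod_cast WithBot.coe_le_coe.mpr (Nat.zero_le d))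
    have h2 : deg (∑ i : Fin n, S.mul (G i) (C n (a i))) ≤ (d : WithBot ℕ) := by
      refine le_trans (deg_sum_le _ _) ?_
      have hle : (Finset.univ.sup fun i : Fin n => deg (S.mul (G i) (C n (a i)))) ≤ D := by
        rw [hD]
        exact Finset.sup_mono_fun fun i _ => deg_mul_C_le S (G i) (a i)
      rw [← hd] at hle
      exact_mod_cast hle
    refine apply_eq_zero_of_deg_lt
      (lt_of_le_of_lt (le_trans (deg_add_le _ _) (max_le h1 h2)) ?_)
    rw [hwlen]
    exact_mod_cast WithBot.coe_lt_coe.mpr (Nat.lt_succ_self d)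
  rw [hlhs, hrhs] at hcoeff
  exact (Finsupp.mem_support_iff.mp hm₀mem) hcoeff

lemma decomposes_unique (S : RawMul 𝔽 n) (hn : 0 < n) (a : Fin n → 𝔽)
    {F : SkewPoly 𝔽 n} {b b' : 𝔽}
    (h1 : Decomposes S a F b) (h2 : Decomposes S a F b') : b = b' := by
  obtain ⟨G, hG⟩ := h1
  obtain ⟨G', hG'⟩ := h2
  have hkey : (∑ i : Fin n, S.mul (G i - G' i) (X 𝔽 i - C n (a i))) = C n (b' - b) := by
    simp only [sub_mul']
    rw [Finset.sum_sub_distrib]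
    have e1 : ∑ i : Fin n, S.mul (G i) (X 𝔽 i - C n (a i)) = F - C n b :=
      eq_sub_of_add_eq hG.symm
    have e2 : ∑ i : Fin n, S.mul (G' i) (X 𝔽 i - C n (a i)) = F - C n b' :=
      eq_sub_of_add_eq hG'.symm
    rw [e1, e2]
    simp only [C, Finsupp.single_sub]
    abel
  have := const_eq_zero S hn a _ _ hkey
  exact (sub_eq_zero.mp this).symm

lemma eval_eq' (S : RawMul 𝔽 n) (hn : 0 < n) {a : Fin n → 𝔽} {F : SkewPoly 𝔽 n} {b : 𝔽}
    (h : Decomposes S a F b) : eval S a F = b := by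
  have hex : ∃ b, Decomposes S a F b := ⟨b, h⟩
  rw [eval, dif_pos hex]
  exact decomposes_unique S hn a hex.choose_spec h

lemma decomposes_C (S : RawMul 𝔽 n) (a : Fin n → 𝔽) (b : 𝔽) :
    Decomposes S a (C n b) b :=
  ⟨0, by simp [zero_mul']⟩

lemma CmulC (S : RawMul 𝔽 n) (c b : 𝔽) : S.mul (C n c) (C n b) = C n (c * b) := by
  rw [S.const_mul, C, Finsupp.smul_single, smul_eq_mul]
  rfl

lemma Xi_mul_C {σ : 𝔽 → Matrix (Fin n) (Fin n) 𝔽} {δ : 𝔽 → Fin n → 𝔽}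
    (S : RawMul 𝔽 n) (hS : HasCommRule S σ δ) (a : Fin n → 𝔽) (i : Fin n) (b : 𝔽) :
    S.mul (X 𝔽 i) (C n b) =
      (∑ j : Fin n, S.mul (C n (σ b i j)) (X 𝔽 j - C n (a j))) +
        C n ((σ b *ᵥ a) i + δ b i) := by
  rw [hS i b]
  have hterm : ∀ j : Fin n, S.mul (C n (σ b i j)) (X 𝔽 j - C n (a j)) =
      Finsupp.single (FreeMonoid.of j) (σ b i j) - Finsupp.single 1 (σ b i j * a j) := by
    intro j
    rw [S.const_mul, smul_sub, X, C, Finsupp.smul_single, Finsupp.smul_single,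
      smul_eq_mul, mul_one, smul_eq_mul]
  simp only [hterm]
  rw [Finset.sum_sub_distrib]
  have hmv : (σ b *ᵥ a) i = ∑ j : Fin n, σ b i j * a j := by
    simp [Matrix.mulVec, dotProduct]
  rw [C, C, hmv, Finsupp.single_add, Finsupp.single_finset_sum]
  abel

lemma decomposes_step {σ : 𝔽 → Matrix (Fin n) (Fin n) 𝔽} {δ : 𝔽 → Fin n → 𝔽}
    (S : RawMul 𝔽 n) (hS : HasCommRule S σ δ) {a : Fin n → 𝔽} {F : SkewPoly 𝔽 n} {b : 𝔽}
    (i : Fin n) (h : Decomposes S a F b) :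
    Decomposes S a (S.mul (X 𝔽 i) F) ((σ b *ᵥ a) i + δ b i) := by
  obtain ⟨G, hG⟩ := h
  refine ⟨fun j => S.mul (X 𝔽 i) (G j) + C n (σ b i j), ?_⟩
  rw [hG, S.mul_add, mul_sum', Xi_mul_C S hS a i b]
  simp only [S.add_mul]
  rw [Finset.sum_add_distrib]
  simp only [← S.mul_assoc]
  abel

lemma exists_decomposes_mono {σ : 𝔽 → Matrix (Fin n) (Fin n) 𝔽} {δ : 𝔽 → Fin n → 𝔽}
    (S : RawMul 𝔽 n) (hS : HasCommRule S σ δ) (m : FreeMonoid (Fin n)) (a : Fin n → 𝔽) :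
    ∃ b, Decomposes S a (Finsupp.single m (1:𝔽)) b := by
  induction m using FreeMonoid.recOn with
  | one => exact ⟨1, decomposes_C S a 1⟩
  | of_mul i m ih =>
    obtain ⟨b, hb⟩ := ih
    refine ⟨(σ b *ᵥ a) i + δ b i, ?_⟩
    have : (Finsupp.single (FreeMonoid.of i * m) (1:𝔽) : SkewPoly 𝔽 n)
        = S.mul (X 𝔽 i) (Finsupp.single m 1) := by
      rw [X, S.mono_mul_mono]
    rw [this]
    exact decomposes_step S hS i hb

end SkewPoly

/-- Recursion for the fundamental functions `N_m(a) = m(a)`: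
`N₁(a) = 1` and `(N_(xᵢm)(a))ᵢ = σ(N_m(a)) a + δ(N_m(a))`. -/
theorem stmt2 {𝔽 : Type*} [DivisionRing 𝔽] {n : ℕ} (hn : 0 < n)
    (σ : 𝔽 → Matrix (Fin n) (Fin n) 𝔽) (δ : 𝔽 → Fin n → 𝔽)
    (hσ : IsMatrixMorphism σ) (hδ : IsVectorDerivation σ δ)
    (S : RawMul 𝔽 n) (hS : HasCommRule S σ δ) :
    (∀ a : Fin n → 𝔽, eval S a (Finsupp.single (1 : FreeMonoid (Fin n)) (1 : 𝔽)) = 1) ∧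
    (∀ (m : FreeMonoid (Fin n)) (a : Fin n → 𝔽),
      (fun i : Fin n => eval S a (Finsupp.single (FreeMonoid.of i * m) (1 : 𝔽))) =
        σ (eval S a (Finsupp.single m (1 : 𝔽))) *ᵥ a +
          δ (eval S a (Finsupp.single m (1 : 𝔽)))) := by
  constructor
  · intro a
    have : (Finsupp.single (1 : FreeMonoid (Fin n)) (1:𝔽) : SkewPoly 𝔽 n) = C n 1 := rfl
    rw [this]
    exact eval_eq' S hn (decomposes_C S a 1)
  · intro m a
    funext i
    obtain ⟨b, hb⟩ := exists_decomposes_mono S hS m a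
    have hb' : eval S a (Finsupp.single m (1:𝔽)) = b := eval_eq' S hn hb
    have hmono : (Finsupp.single (FreeMonoid.of i * m) (1:𝔽) : SkewPoly 𝔽 n)
        = S.mul (X 𝔽 i) (Finsupp.single m 1) := by
      rw [X, S.mono_mul_mono]
    rw [hmono, eval_eq' S hn (decomposes_step S hS i hb), hb']
    simp
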